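/- Let μ be a probability measure on a measurable space X, and let σ : ℝ → ℝ be Lipschitz with constant L ≥ 0 and bounded by B ≥ 0. Let f : X → ℝ be μ-integrable, let g : X → ℝ be measurable with |g(x)| ≤ C for μ-almost every x (C ≥ 0), and let w, v ∈ ℝ with |w| ≤ C_w. Then the connectivity difference satisfies |Δ(f, w) − Δ(g, v)| = |∫ f(x)·σ(w·f(x)) dμ(x) − ∫ g(x)·σ(v·g(x)) dμ(x)| ≤ (B + C·L·C_w)·∫ |f(x) − g(x)| dμ(x) + C²·L·|w − v|. -/

import Mathlib

open MeasureTheory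

/-- For a probability measure `μ`, a Lipschitz and bounded
activation `σ`, a `μ`-integrable `f`, a measurable `g` with `|g| ≤ C` a.e., and
weights `w, v` with `|w| ≤ C_w`, the connectivity difference satisfies
`|∫ f·σ(w·f) dμ − ∫ g·σ(v·g) dμ| ≤ (B + C·L·C_w)·∫ |f − g| dμ + C²·L·|w − v|`. -/
theorem connectivity_difference_bound
    {X : Type*} [MeasurableSpace X] (μ : Measure X) [IsProbabilityMeasure μ]
    (σ : ℝ → ℝ) (L B C Cw w v : ℝ)
    (hL : 0 ≤ L) (hB : 0 ≤ B) (hC : 0 ≤ C)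
    (hLip : ∀ x y : ℝ, |σ x - σ y| ≤ L * |x - y|)
    (hBd : ∀ x : ℝ, |σ x| ≤ B)
    (f g : X → ℝ)
    (hf : Integrable f μ)
    (hgm : Measurable g)
    (hg : ∀ᵐ x ∂μ, |g x| ≤ C)
    (hw : |w| ≤ Cw) :
    |(∫ x, f x * σ (w * f x) ∂μ) - ∫ x, g x * σ (v * g x) ∂μ| ≤
      (B + C * L * Cw) * (∫ x, |f x - g x| ∂μ) + C ^ 2 * L * |w - v| := by
  have hσlip : LipschitzWith L.toNNReal σ := by
    apply LipschitzWith.of_dist_le_mul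
    intro x y
    simpa [Real.dist_eq, Real.coe_toNNReal L hL] using hLip x y
  have hσc : Continuous σ := hσlip.continuous
  -- integrability facts
  have hgint : Integrable g μ := by
    apply Integrable.mono' (integrable_const C) hgm.aestronglyMeasurable
    filter_upwards [hg] with x hx
    simpa [Real.norm_eq_abs] using hx
  have hfσ : Integrable (fun x => f x * σ (w * f x)) μ := by
    have := hf.bdd_mul (c := B)
      (hσc.comp_aestronglyMeasurable ((hf.aestronglyMeasurable).const_smul w))
      (ae_of_all _ fun x => by simpa [Real.norm_eq_abs] using hBd (w * f x))
    simpa [mul_comm, smul_eq_mul] using this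
  have hgσ : Integrable (fun x => g x * σ (v * g x)) μ := by
    have := hgint.bdd_mul (c := B)
      (hσc.comp_aestronglyMeasurable ((hgint.aestronglyMeasurable).const_smul v))
      (ae_of_all _ fun x => by simpa [Real.norm_eq_abs] using hBd (v * g x))
    simpa [mul_comm, smul_eq_mul] using this
  have hfg : Integrable (fun x => |f x - g x|) μ := (hf.sub hgint).abs
  -- pointwise a.e. bound
  have hpt : ∀ᵐ x ∂μ, |f x * σ (w * f x) - g x * σ (v * g x)| ≤
      (B + C * L * Cw) * |f x - g x| + C ^ 2 * L * |w - v| := by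
    filter_upwards [hg] with x hgx
    have h1 : |f x * σ (w * f x) - g x * σ (v * g x)| ≤
        |f x - g x| * |σ (w * f x)| + |g x| * |σ (w * f x) - σ (v * g x)| := by
      calc |f x * σ (w * f x) - g x * σ (v * g x)|
          = |(f x - g x) * σ (w * f x) + g x * (σ (w * f x) - σ (v * g x))| := by
            ring_nf
        _ ≤ |(f x - g x) * σ (w * f x)| + |g x * (σ (w * f x) - σ (v * g x))| :=
            abs_add_le _ _
        _ = |f x - g x| * |σ (w * f x)| + |g x| * |σ (w * f x) - σ (v * g x)| := by
            rw [abs_mul, abs_mul]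
    have h2 : |σ (w * f x) - σ (v * g x)| ≤ L * |w * f x - v * g x| := hLip _ _
    have h3 : |w * f x - v * g x| ≤ Cw * |f x - g x| + C * |w - v| := by
      calc |w * f x - v * g x| = |w * (f x - g x) + (w - v) * g x| := by ring_nf
        _ ≤ |w * (f x - g x)| + |(w - v) * g x| := abs_add_le _ _
        _ = |w| * |f x - g x| + |w - v| * |g x| := by rw [abs_mul, abs_mul]
        _ ≤ Cw * |f x - g x| + C * |w - v| := by
            have := abs_nonneg (f x - g x)
            have := abs_nonneg (w - v)
            nlinarith
    have hb := hBd (w * f x)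
    have h4 : 0 ≤ |f x - g x| := abs_nonneg _
    have h5 : 0 ≤ |w - v| := abs_nonneg _
    have h6 : 0 ≤ |g x| := abs_nonneg _
    nlinarith [mul_le_mul_of_nonneg_left h3 hL, abs_nonneg (σ (w * f x) - σ (v * g x))]
  calc |(∫ x, f x * σ (w * f x) ∂μ) - ∫ x, g x * σ (v * g x) ∂μ|
      = |∫ x, (f x * σ (w * f x) - g x * σ (v * g x)) ∂μ| := by
        rw [integral_sub hfσ hgσ]
    _ ≤ ∫ x, |f x * σ (w * f x) - g x * σ (v * g x)| ∂μ := by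
        simpa [Real.norm_eq_abs] using
          norm_integral_le_integral_norm (fun x => f x * σ (w * f x) - g x * σ (v * g x))
    _ ≤ ∫ x, ((B + C * L * Cw) * |f x - g x| + C ^ 2 * L * |w - v|) ∂μ := by
        apply integral_mono_ae (hfσ.sub hgσ).abs ((hfg.const_mul _).add (integrable_const _)) hpt
    _ = (B + C * L * Cw) * (∫ x, |f x - g x| ∂μ) + C ^ 2 * L * |w - v| := by
        rw [integral_add (hfg.const_mul _) (integrable_const _), integral_const_mul,
          integral_const]
        simp
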